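/- Let A, B, G be finite sets in an abelian group and suppose for every finite set B' and every τ ≥ 1 the number of s with |A ∩ (B' + s)| ≥ τ is at most K|A||B'|²/τ³ (i.e. A is of Szemerédi–Trotter type with constant K). Then the number of s ∈ A - B with |A ∩ (B + s)| > 0 is at least c·|A||B|^{1/2}K^{-1/2} for some absolute constant c > 0. -/

import Mathlib

open Finset Pointwise

private lemma tail_sum' (T : ℕ) (hT : 1 ≤ T) : ∀ M : ℕ,
    ∑ τ ∈ Finset.Ioc T M, (1:ℝ)/(τ:ℝ)^3 ≤ 1/(2*(T:ℝ)^2) - 1/(2*((max T M :ℕ):ℝ)^2) := by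
  intro M
  induction M with
  | zero => simp
  | succ M ih =>
    rcases le_or_gt (M+1) T with h | h
    · rw [Finset.Ioc_eq_empty_of_le h, max_eq_left h]
      simp
    · have hTM : T ≤ M := Nat.lt_succ_iff.mp h
      rw [Finset.sum_Ioc_succ_top hTM, max_eq_right (by omega : T ≤ M + 1)]
      rw [max_eq_right hTM] at ih
      have hM1 : (1:ℝ) ≤ (M:ℝ) := by exact_mod_cast hT.trans hTM
      have key : (1:ℝ)/((M:ℝ)+1)^3 ≤ 1/(2*(M:ℝ)^2) - 1/(2*((M:ℝ)+1)^2) := by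
        rw [div_sub_div _ _ (by positivity) (by positivity),
          div_le_div_iff₀ (by positivity) (by positivity)]
        nlinarith [sq_nonneg (M:ℝ), hM1]
      push_cast
      linarith

private lemma tail_sum (T : ℕ) (hT : 1 ≤ T) (M : ℕ) :
    ∑ τ ∈ Finset.Ioc T M, (1:ℝ)/(τ:ℝ)^3 ≤ 1/(2*(T:ℝ)^2) := by
  refine (tail_sum' T hT M).trans ?_
  have : 0 ≤ 1/(2*((max T M :ℕ):ℝ)^2) := by positivity
  linarith

private lemma lhs_eq (a b K : ℝ) (hb : 0 < b) (hK : 0 < K) :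
    (1/4 : ℝ) * a * b ^ ((1:ℝ)/2) * K ^ (-(1:ℝ)/2) = a * b / (4 * Real.sqrt (K * b)) := by
  rw [show (-(1:ℝ)/2) = -((1:ℝ)/2) by ring, Real.rpow_neg hK.le,
    ← Real.sqrt_eq_rpow, ← Real.sqrt_eq_rpow, Real.sqrt_mul hK.le]
  have hbb : Real.sqrt b * Real.sqrt b = b := Real.mul_self_sqrt hb.le
  have hsK : (0:ℝ) < Real.sqrt K := Real.sqrt_pos.mpr hK
  have hsb : (0:ℝ) < Real.sqrt b := Real.sqrt_pos.mpr hb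
  field_simp
  linear_combination a * (by nlinarith [hbb] : Real.sqrt b ^ 2 = b)

private lemma key_id {G : Type} [AddCommGroup G] [DecidableEq G] (A B : Finset G) :
    ∑ s ∈ A - B, (A ∩ B.image (fun b => b + s)).card = A.card * B.card := by
  have h1 : ∀ s : G, A ∩ B.image (fun b => b + s) = A.filter (fun a => a - s ∈ B) := by
    intro s
    ext a
    simp only [mem_inter, mem_filter, mem_image]
    constructor
    · rintro ⟨ha, b, hb, rfl⟩
      exact ⟨ha, by simpa using hb⟩
    · rintro ⟨ha, hb⟩
      exact ⟨ha, a - s, hb, by abel⟩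
  simp_rw [h1, Finset.card_filter]
  rw [Finset.sum_comm]
  have h2 : ∀ a ∈ A, (∑ s ∈ A - B, if a - s ∈ B then 1 else 0) = B.card := by
    intro a ha
    rw [← Finset.card_filter]
    have : (A - B).filter (fun s => a - s ∈ B) = B.image (fun b => a - b) := by
      ext s
      simp only [mem_filter, mem_image, Finset.mem_sub]
      constructor
      · rintro ⟨-, hb⟩
        exact ⟨a - s, hb, by abel⟩
      · rintro ⟨b, hb, rfl⟩
        exact ⟨⟨a, ha, b, hb, rfl⟩, by simpa using hb⟩
    rw [this, Finset.card_image_of_injective _ (sub_right_injective)]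
  rw [Finset.sum_congr rfl h2, Finset.sum_const, smul_eq_mul]

private lemma layer_cake {G : Type} [AddCommGroup G] [DecidableEq G] (D : Finset G)
    (r : G → ℕ) (M : ℕ) (hrM : ∀ s ∈ D, r s ≤ M) :
    ∑ s ∈ D, r s = ∑ τ ∈ Finset.Icc 1 M, (D.filter (fun s => τ ≤ r s)).card := by
  have h : ∀ s ∈ D, r s = ((Finset.Icc 1 M).filter (fun τ => τ ≤ r s)).card := by
    intro s hs
    have : (Finset.Icc 1 M).filter (fun τ => τ ≤ r s) = Finset.Icc 1 (r s) := by
      ext τ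
      simp only [mem_filter, Finset.mem_Icc]
      have := hrM s hs
      omega
    rw [this, Nat.card_Icc]; omega
  rw [Finset.sum_congr rfl h]
  simp_rw [Finset.card_filter]
  rw [Finset.sum_comm]

theorem stmt_8 :
    ∃ c : ℝ, 0 < c ∧
      ∀ (G : Type) [AddCommGroup G] [DecidableEq G] (A B : Finset G) (K : ℝ), 0 < K →
        (∀ (B' : Finset G) (τ : ℝ), 1 ≤ τ →
          (((A - B').filter
              (fun s => τ ≤ ((A ∩ B'.image (fun b => b + s)).card : ℝ))).card : ℝ) ≤
            K * A.card * (B'.card : ℝ) ^ 2 / τ ^ 3) →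
        c * A.card * (B.card : ℝ) ^ ((1 : ℝ) / 2) * K ^ (-(1 : ℝ) / 2) ≤
          (((A - B).filter (fun s => 0 < (A ∩ B.image (fun b => b + s)).card)).card : ℝ) := by
  refine ⟨1/4, by norm_num, ?_⟩
  intro G _ _ A B K hK hyp
  rcases A.eq_empty_or_nonempty with rfl | hA
  · simp
  rcases B.eq_empty_or_nonempty with rfl | hB
  · simp [Real.zero_rpow (by norm_num : (1:ℝ)/2 ≠ 0)]
  have hA1 : (1:ℝ) ≤ A.card := by exact_mod_cast hA.card_pos
  have hB1 : (1:ℝ) ≤ B.card := by exact_mod_cast hB.card_pos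
  set a : ℝ := (A.card : ℝ) with ha_def
  set b : ℝ := (B.card : ℝ) with hb_def
  -- Step 0 : K ≥ 1
  have hK1 : 1 ≤ K := by
    have h := hyp {0} 1 le_rfl
    have h2 : (A - ({0}:Finset G)) = A := by
      simp [Finset.sub_singleton]
    have h3 : ((A - ({0}:Finset G)).filter
        (fun s => (1:ℝ) ≤ ((A ∩ ({0}:Finset G).image (fun b => b + s)).card : ℝ))).card
        = A.card := by
      rw [h2]
      rw [Finset.filter_true_of_mem]
      intro s hs
      have : A ∩ ({0}:Finset G).image (fun b => b + s) = {s} := by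
        rw [Finset.image_singleton, zero_add, Finset.inter_singleton_of_mem hs]
      rw [this]
      simp
    rw [h3] at h
    simp only [Finset.card_singleton, Nat.cast_one, one_pow, mul_one, div_one] at h
    nlinarith
  -- the filter on the RHS is everything
  have hfilter : (A - B).filter (fun s => 0 < (A ∩ B.image (fun b => b + s)).card) = A - B := by
    apply Finset.filter_true_of_mem
    intro s hs
    rw [Finset.mem_sub] at hs
    obtain ⟨x, hx, y, hy, rfl⟩ := hs
    rw [Finset.card_pos]
    exact ⟨x, Finset.mem_inter.mpr ⟨hx, Finset.mem_image.mpr ⟨y, hy, by abel⟩⟩⟩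
  rw [hfilter]
  set D : Finset G := A - B with hD_def
  set N : ℝ := (D.card : ℝ) with hN_def
  set r : G → ℕ := fun s => (A ∩ B.image (fun b => b + s)).card with hr_def
  set M : ℕ := B.card with hM_def
  -- threshold
  set T : ℕ := ⌈Real.sqrt (K * b)⌉₊ with hT_def
  have hKb1 : (1:ℝ) ≤ K * b := by nlinarith
  have hsb1 : (1:ℝ) ≤ Real.sqrt (K * b) := by
    nlinarith [Real.sq_sqrt (by positivity : (0:ℝ) ≤ K * b), Real.sqrt_nonneg (K * b)]
  have hT1 : 1 ≤ T := by
    have : (0:ℝ) < Real.sqrt (K * b) := by linarith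
    exact Nat.one_le_iff_ne_zero.mpr (by positivity)
  have hT1R : (1:ℝ) ≤ (T:ℝ) := by exact_mod_cast hT1
  have hTle : (T:ℝ) ≤ 2 * Real.sqrt (K * b) := by
    have := Nat.ceil_lt_add_one (Real.sqrt_nonneg (K * b))
    linarith
  have hTsq : K * b ≤ (T:ℝ)^2 := by
    have h1 := Nat.le_ceil (Real.sqrt (K * b))
    nlinarith [Real.sq_sqrt (by positivity : (0:ℝ) ≤ K * b), Real.sqrt_nonneg (K * b)]
  -- master identity
  have hkey : a * b = ∑ τ ∈ Finset.Icc 1 M, ((D.filter (fun s => τ ≤ r s)).card : ℝ) := by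
    have h1 := key_id A B
    have h2 := layer_cake D r M (fun s _ => by
      exact (Finset.card_le_card Finset.inter_subset_right).trans Finset.card_image_le)
    have h3 : ∑ τ ∈ Finset.Icc 1 M, (D.filter (fun s => τ ≤ r s)).card = A.card * B.card := by
      rw [← h2]; exact h1
    calc a * b = ((A.card * B.card : ℕ) : ℝ) := by push_cast; rfl
      _ = _ := by rw [← h3]; push_cast; rfl
  -- split the sum
  have hsub : Finset.Icc 1 M ⊆ Finset.Icc 1 T ∪ Finset.Ioc T M := by
    intro τ hτ
    simp only [Finset.mem_Icc, Finset.mem_union, Finset.mem_Ioc] at *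
    omega
  have hdisj : Disjoint (Finset.Icc 1 T) (Finset.Ioc T M) := by
    rw [Finset.disjoint_left]
    intro τ h1 h2
    simp only [Finset.mem_Icc, Finset.mem_Ioc] at *
    omega
  have hsplit : ∑ τ ∈ Finset.Icc 1 M, ((D.filter (fun s => τ ≤ r s)).card : ℝ) ≤
      (∑ τ ∈ Finset.Icc 1 T, ((D.filter (fun s => τ ≤ r s)).card : ℝ)) +
      ∑ τ ∈ Finset.Ioc T M, ((D.filter (fun s => τ ≤ r s)).card : ℝ) := by
    rw [← Finset.sum_union hdisj]
    exact Finset.sum_le_sum_of_subset_of_nonneg hsub (fun _ _ _ => by positivity)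
  -- light part
  have hlight : ∑ τ ∈ Finset.Icc 1 T, ((D.filter (fun s => τ ≤ r s)).card : ℝ) ≤ (T:ℝ) * N := by
    have : ∀ τ ∈ Finset.Icc 1 T, ((D.filter (fun s => τ ≤ r s)).card : ℝ) ≤ N := by
      intro τ _
      exact_mod_cast Nat.cast_le.mpr (Finset.card_le_card (Finset.filter_subset _ _))
    calc ∑ τ ∈ Finset.Icc 1 T, ((D.filter (fun s => τ ≤ r s)).card : ℝ)
        ≤ ∑ τ ∈ Finset.Icc 1 T, N := Finset.sum_le_sum this
      _ = (T:ℝ) * N := by rw [Finset.sum_const, Nat.card_Icc]; push_cast; ring_nf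
  -- heavy part
  have hheavy : ∑ τ ∈ Finset.Ioc T M, ((D.filter (fun s => τ ≤ r s)).card : ℝ) ≤
      K * a * b^2 * (1/(2*(T:ℝ)^2)) := by
    have hterm : ∀ τ ∈ Finset.Ioc T M, ((D.filter (fun s => τ ≤ r s)).card : ℝ) ≤
        K * a * b^2 * (1/(τ:ℝ)^3) := by
      intro τ hτ
      rw [Finset.mem_Ioc] at hτ
      have hτ1 : (1:ℝ) ≤ (τ:ℝ) := by exact_mod_cast hT1.trans hτ.1.le
      have h := hyp B (τ:ℝ) hτ1
      have heq : (A - B).filter (fun s => (τ:ℝ) ≤ ((A ∩ B.image (fun b => b + s)).card : ℝ))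
          = D.filter (fun s => τ ≤ r s) := by
        apply Finset.filter_congr
        intro s _
        exact_mod_cast Iff.rfl
      rw [heq] at h
      rw [mul_one_div]
      exact h
    calc ∑ τ ∈ Finset.Ioc T M, ((D.filter (fun s => τ ≤ r s)).card : ℝ)
        ≤ ∑ τ ∈ Finset.Ioc T M, K * a * b^2 * (1/(τ:ℝ)^3) := Finset.sum_le_sum hterm
      _ = K * a * b^2 * ∑ τ ∈ Finset.Ioc T M, (1/(τ:ℝ)^3) := by rw [Finset.mul_sum]
      _ ≤ K * a * b^2 * (1/(2*(T:ℝ)^2)) := by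
          apply mul_le_mul_of_nonneg_left (tail_sum T hT1 M)
          positivity
  have hheavy2 : K * a * b^2 * (1/(2*(T:ℝ)^2)) ≤ a * b / 2 := by
    rw [mul_one_div, div_le_div_iff₀ (by positivity) (by norm_num)]
    nlinarith [mul_nonneg (by linarith : (0:ℝ) ≤ a) (by linarith : (0:ℝ) ≤ b)]
  -- combine
  have hmain : a * b / 2 ≤ (T:ℝ) * N := by
    linarith [hsplit, hlight, hheavy, hheavy2, hkey.le, hkey.ge]
  -- conclude
  have hNlb : a * b / (2 * (T:ℝ)) ≤ N := by
    rw [div_le_iff₀ (by positivity)]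
    nlinarith
  have hNlb2 : a * b / (4 * Real.sqrt (K * b)) ≤ a * b / (2 * (T:ℝ)) := by
    rw [div_le_div_iff₀ (by positivity) (by positivity)]
    exact mul_le_mul_of_nonneg_left (by linarith) (by positivity)
  rw [lhs_eq a b K (by linarith) hK]
  exact hNlb2.trans hNlb
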